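/- For all integers d ≥ 1 and n ≥ 0, the number of Schmidt type d-fold partition diamonds of 2n+1 is divisible by 2^d: s_d(2n+1) ≡ 0 (mod 2^d). -/

import Mathlib

open Finset

/-- A `d`-fold partition diamond: nonnegative integers `a 0, a 1, …` together with
`b k j` (representing `b_{k+1, j+1}`) satisfying `a k ≥ b k j ≥ a (k+1)`,
with all but finitely many entries equal to zero. -/
structure DFold (d : ℕ) where
  a : ℕ → ℕ
  b : ℕ → Fin d → ℕ
  upper : ∀ k j, b k j ≤ a k
  lower : ∀ k j, a (k + 1) ≤ b k j
  fin : ∃ N, ∀ k, N ≤ k → a k = 0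

/-- `sFold d n`: the number of Schmidt type `d`-fold partition diamonds of `n`
(only the links `a k` are summed). -/
noncomputable def sFold (d n : ℕ) : ℕ :=
  Set.ncard {D : DFold d | (∑ᶠ k, D.a k) = n}

namespace SFoldAux

lemma dfold_ext {d : ℕ} {D E : DFold d} (ha : D.a = E.a) (hb : D.b = E.b) : D = E := by
  cases D; cases E; cases ha; cases hb; rfl

/-- The parity-jump predicate. -/
def Pp (a : ℕ → ℕ) (k : ℕ) : Prop := (a k + a (k + 1)) % 2 = 1

instance (a : ℕ → ℕ) : DecidablePred (Pp a) := fun _ => Nat.decEq _ _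

lemma exists_Pp {a : ℕ → ℕ} (hfin : ∃ N, ∀ k, N ≤ k → a k = 0)
    (hodd : ¬ 2 ∣ ∑ᶠ k, a k) : ∃ k, Pp a k := by
  by_contra h
  push_neg at h
  have hpar : ∀ k, a k % 2 = a 0 % 2 := by
    intro k
    induction k with
    | zero => rfl
    | succ k ih =>
      have hk := h k
      unfold Pp at hk
      omega
  obtain ⟨N, hN⟩ := hfin
  have h0 : a 0 % 2 = 0 := by
    have := hpar N
    rw [hN N le_rfl] at this
    omega
  apply hodd
  have hsupp : Function.support a ⊆ ↑(Finset.range N) := by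
    intro k hk
    simp only [Function.mem_support] at hk
    simp only [Finset.coe_range, Set.mem_Iio]
    by_contra hc
    exact hk (hN k (by omega))
  rw [finsum_eq_sum_of_support_subset a hsupp]
  refine Finset.dvd_sum fun k _ => ?_
  have := hpar k
  omega

/-- Flip (reflect) the `b` entries at level `k0` according to `ε`. -/
def dflip {d : ℕ} (D : DFold d) (k0 : ℕ) (ε : Fin d → Bool) : DFold d where
  a := D.a
  b := fun k j =>
    if k = k0 ∧ ε j = true then D.a k0 + D.a (k0 + 1) - D.b k j else D.b k j
  upper := by
    intro k j
    split
    · next h =>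
      obtain ⟨rfl, -⟩ := h
      have h1 := D.lower k j
      omega
    · exact D.upper k j
  lower := by
    intro k j
    split
    · next h =>
      obtain ⟨rfl, -⟩ := h
      have h1 := D.upper k j
      omega
    · exact D.lower k j
  fin := D.fin

@[simp] lemma dflip_a {d : ℕ} (D : DFold d) (k0 : ℕ) (ε : Fin d → Bool) :
    (dflip D k0 ε).a = D.a := rfl

lemma dflip_b {d : ℕ} (D : DFold d) (k0 : ℕ) (ε : Fin d → Bool) (k : ℕ) (j : Fin d) :
    (dflip D k0 ε).b k j =
      if k = k0 ∧ ε j = true then D.a k0 + D.a (k0 + 1) - D.b k j else D.b k j := rfl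

lemma dflip_dflip {d : ℕ} (D : DFold d) (k0 : ℕ) (ε : Fin d → Bool) :
    dflip (dflip D k0 ε) k0 ε = D := by
  refine dfold_ext rfl ?_
  funext k j
  rw [dflip_b, dflip_b, dflip_a]
  split
  · next h =>
    obtain ⟨rfl, h2⟩ := h
    have h1 := D.upper k j
    have h3 := D.lower k j
    omega
  · rfl

noncomputable def epsOf {d : ℕ} (D : DFold d) (k0 : ℕ) : Fin d → Bool :=
  fun j => decide (D.a k0 + D.a (k0 + 1) ≤ 2 * D.b k0 j)

lemma epsOf_true {d : ℕ} {D : DFold d} {k0 : ℕ} {j : Fin d}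
    (h : D.a k0 + D.a (k0 + 1) ≤ 2 * D.b k0 j) : epsOf D k0 j = true :=
  decide_eq_true h

lemma epsOf_false {d : ℕ} {D : DFold d} {k0 : ℕ} {j : Fin d}
    (h : ¬ (D.a k0 + D.a (k0 + 1) ≤ 2 * D.b k0 j)) : epsOf D k0 j = false :=
  decide_eq_false h

noncomputable def myEquiv (d n : ℕ) :
    {D : DFold d // (∑ᶠ k, D.a k) = 2 * n + 1} ≃
      (Fin d → Bool) ×
      {D : DFold d // (∑ᶠ k, D.a k) = 2 * n + 1 ∧
        ∀ (h : ∃ k, Pp D.a k) (j : Fin d),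
          2 * D.b (Nat.find h) j < D.a (Nat.find h) + D.a (Nat.find h + 1)} where
  toFun := fun DD =>
    have hodd : ¬ 2 ∣ ∑ᶠ k, DD.1.a k := by rw [DD.2]; omega
    have hP : ∃ k, Pp DD.1.a k := exists_Pp DD.1.fin hodd
    ⟨epsOf DD.1 (Nat.find hP),
     ⟨dflip DD.1 (Nat.find hP) (epsOf DD.1 (Nat.find hP)), DD.2, by
        intro h' j
        show 2 * (dflip DD.1 (Nat.find hP) (epsOf DD.1 (Nat.find hP))).b (Nat.find hP) j <
          DD.1.a (Nat.find hP) + DD.1.a (Nat.find hP + 1)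
        have hsodd : (DD.1.a (Nat.find hP) + DD.1.a (Nat.find hP + 1)) % 2 = 1 :=
          Nat.find_spec hP
        rw [dflip_b]
        have hup := DD.1.upper (Nat.find hP) j
        have hlo := DD.1.lower (Nat.find hP) j
        by_cases hc : DD.1.a (Nat.find hP) + DD.1.a (Nat.find hP + 1) ≤
            2 * DD.1.b (Nat.find hP) j
        · rw [if_pos ⟨rfl, epsOf_true hc⟩]
          omega
        · rw [if_neg (by rintro ⟨-, h2⟩; rw [epsOf_false hc] at h2; exact Bool.false_ne_true h2)]
          omega⟩⟩
  invFun := fun P =>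
    have hodd : ¬ 2 ∣ ∑ᶠ k, P.2.1.a k := by rw [P.2.2.1]; omega
    have hP : ∃ k, Pp P.2.1.a k := exists_Pp P.2.1.fin hodd
    ⟨dflip P.2.1 (Nat.find hP) P.1, P.2.2.1⟩
  left_inv := by
    rintro ⟨D, hD⟩
    apply Subtype.ext
    exact dflip_dflip D _ _
  right_inv := by
    rintro ⟨ε, D, hD⟩
    have hodd : ¬ 2 ∣ ∑ᶠ k, D.a k := by rw [hD.1]; omega
    have hP : ∃ k, Pp D.a k := exists_Pp D.fin hodd
    have hsodd : (D.a (Nat.find hP) + D.a (Nat.find hP + 1)) % 2 = 1 := Nat.find_spec hP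
    have hε : epsOf (dflip D (Nat.find hP) ε) (Nat.find hP) = ε := by
      funext j
      have hup := D.upper (Nat.find hP) j
      have hlo := D.lower (Nat.find hP) j
      have hlt := hD.2 hP j
      cases hej : ε j with
      | false =>
        refine epsOf_false ?_
        show ¬ D.a (Nat.find hP) + D.a (Nat.find hP + 1) ≤
          2 * (dflip D (Nat.find hP) ε).b (Nat.find hP) j
        rw [dflip_b, if_neg (by rintro ⟨-, h2⟩; rw [hej] at h2; exact Bool.false_ne_true h2)]
        omega
      | true =>
        refine epsOf_true ?_
        show D.a (Nat.find hP) + D.a (Nat.find hP + 1) ≤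
          2 * (dflip D (Nat.find hP) ε).b (Nat.find hP) j
        rw [dflip_b, if_pos ⟨rfl, hej⟩]
        omega
    show (⟨epsOf (dflip D (Nat.find hP) ε) (Nat.find hP), _⟩ :
        (Fin d → Bool) × _) = ((ε, ⟨D, hD⟩) : (Fin d → Bool) ×
          {D : DFold d // (∑ᶠ k, D.a k) = 2 * n + 1 ∧
            ∀ (h : ∃ k, Pp D.a k) (j : Fin d),
              2 * D.b (Nat.find h) j < D.a (Nat.find h) + D.a (Nat.find h + 1)})
    refine Prod.ext hε (Subtype.ext ?_)
    show dflip (dflip D (Nat.find hP) ε) (Nat.find hP)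
        (epsOf (dflip D (Nat.find hP) ε) (Nat.find hP)) = D
    rw [hε]
    exact dflip_dflip D _ _

end SFoldAux

/-- Theorem 4.4: for all `d ≥ 1` and `n ≥ 0`, `s_d(2n+1) ≡ 0 (mod 2^d)`. -/
theorem sFold_odd_congruence (d : ℕ) (hd : 1 ≤ d) (n : ℕ) :
    2 ^ d ∣ sFold d (2 * n + 1) := by
  classical
  have h1 := Nat.card_congr (SFoldAux.myEquiv d n)
  rw [Nat.card_prod] at h1
  have h2 : Nat.card (Fin d → Bool) = 2 ^ d := by
    simp [Nat.card_eq_fintype_card]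
  rw [h2] at h1
  have h3 : sFold d (2 * n + 1) = Nat.card
      {D : DFold d // (∑ᶠ k, D.a k) = 2 * n + 1} := by
    rw [sFold, ← Nat.card_coe_set_eq]
    rfl
  rw [h3, h1]
  exact Dvd.intro _ rfl
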